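/- Let A be a Banach algebra. Then every f ∈ A* satisfies: T_f maps weakly precompact sets onto L-sets, if and only if the multiplication of A is jointly weakly sequentially continuous (x_n y_n → 0 weakly whenever x_n → 0 and y_n → 0 weakly). -/

import Mathlib

open Filter Topology ENNReal

/-- A sequence is weakly null if `f (x n) → 0` for every continuous linear functional `f`. -/
def WeaklyNull {A : Type*} [NormedAddCommGroup A] [NormedSpace ℝ A] (x : ℕ → A) : Prop :=
  ∀ f : A →L[ℝ] ℝ, Tendsto (fun n => f (x n)) atTop (𝓝 0)

/-- A sequence is weakly Cauchy if `f (x n)` converges for every continuous linear functional. -/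
def WeaklyCauchy {A : Type*} [NormedAddCommGroup A] [NormedSpace ℝ A] (x : ℕ → A) : Prop :=
  ∀ f : A →L[ℝ] ℝ, ∃ L : ℝ, Tendsto (fun n => f (x n)) atTop (𝓝 L)

/-- `E ⊆ A*` is an L-set: `sup_{f ∈ E} |f (x n)| → 0` for every weakly null `x`. -/
def LSet {A : Type*} [NormedAddCommGroup A] [NormedSpace ℝ A] (E : Set (A →L[ℝ] ℝ)) : Prop :=
  ∀ x : ℕ → A, WeaklyNull x → ∀ ε > (0 : ℝ), ∃ N : ℕ, ∀ n ≥ N, ∀ f ∈ E, |f (x n)| < ε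

/-- A set is weakly precompact if every sequence in it has a weakly Cauchy subsequence. -/
def WeaklyPrecompact {A : Type*} [NormedAddCommGroup A] [NormedSpace ℝ A] (K : Set A) : Prop :=
  ∀ x : ℕ → A, (∀ n, x n ∈ K) → ∃ φ : ℕ → ℕ, StrictMono φ ∧ WeaklyCauchy (x ∘ φ)

/-- A map is completely continuous if it sends weakly null sequences to norm null sequences. -/
def CompletelyContinuous {A B : Type*} [NormedAddCommGroup A] [NormedSpace ℝ A]
    [NormedAddCommGroup B] (T : A → B) : Prop :=
  ∀ x : ℕ → A, WeaklyNull x → Tendsto (fun n => ‖T (x n)‖) atTop (𝓝 0)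

/-- The multiplication operator `T_f : A → A*`, `(T_f a) x = f (a * x)`. -/
noncomputable def Tf {A : Type*} [NormedRing A] [NormedAlgebra ℝ A]
    (f : A →L[ℝ] ℝ) (a : A) : A →L[ℝ] ℝ :=
  f.comp (ContinuousLinearMap.mul ℝ A a)

/-- The multiplication operator `S_f : A → A*`, `(S_f a) x = f (x * a)`. -/
noncomputable def Sf {A : Type*} [NormedRing A] [NormedAlgebra ℝ A]
    (f : A →L[ℝ] ℝ) (a : A) : A →L[ℝ] ℝ :=
  f.comp ((ContinuousLinearMap.mul ℝ A).flip a)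

/-- `w` is an ℓ¹-sequence: equivalent to the unit vector basis of ℓ¹. -/
def IsL1Sequence {A : Type*} [NormedAddCommGroup A] [NormedSpace ℝ A] (w : ℕ → A) : Prop :=
  ∃ c C : ℝ, 0 < c ∧ ∀ (s : Finset ℕ) (lam : ℕ → ℝ),
    c * ∑ n ∈ s, |lam n| ≤ ‖∑ n ∈ s, lam n • w n‖ ∧
      ‖∑ n ∈ s, lam n • w n‖ ≤ C * ∑ n ∈ s, |lam n|

/-- The Schur property: weakly convergent sequences are norm convergent. -/
def SchurProperty (A : Type*) [NormedAddCommGroup A] [NormedSpace ℝ A] : Prop :=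
  ∀ (x : ℕ → A) (L : A),
    (∀ f : A →L[ℝ] ℝ, Tendsto (fun n => f (x n)) atTop (𝓝 (f L))) →
      Tendsto x atTop (𝓝 L)

open Filter Topology

lemma weaklyNull_comp' {A : Type*} [NormedAddCommGroup A] [NormedSpace ℝ A] {x : ℕ → A}
    (hx : WeaklyNull x) {k : ℕ → ℕ} (hk : Tendsto k atTop atTop) :
    WeaklyNull (fun n => x (k n)) := fun f => (hx f).comp hk

lemma weaklyPrecompact_range {A : Type*} [NormedAddCommGroup A] [NormedSpace ℝ A] {x : ℕ → A}
    (hx : WeaklyNull x) : WeaklyPrecompact (Set.range x) := by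
  intro z hz
  choose k hk using hz
  by_cases h : ∃ m, ∃ᶠ n in atTop, k n = m
  · obtain ⟨m, hm⟩ := h
    obtain ⟨φ, hφ, hφm⟩ := extraction_of_frequently_atTop hm
    refine ⟨φ, hφ, fun f => ⟨f (x m), ?_⟩⟩
    have : ∀ n, f ((z ∘ φ) n) = f (x m) := fun n => by
      simp only [Function.comp_apply, ← hk (φ n), hφm n]
    simp_rw [this]
    exact tendsto_const_nhds
  · push_neg at h
    have hk' : Tendsto k atTop atTop := by
      rw [tendsto_atTop]
      intro b
      have h2 : ∀ᶠ n in atTop, ∀ m ∈ Finset.range b, k n ≠ m := by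
        rw [eventually_all_finset]
        exact fun m _ => h m
      filter_upwards [h2] with n hn
      by_contra hlt
      exact hn (k n) (Finset.mem_range.2 (not_le.mp hlt)) rfl
    refine ⟨id, strictMono_id, fun f => ⟨0, ?_⟩⟩
    have : ∀ n, f ((z ∘ id) n) = f (x (k n)) := fun n => by
      simp only [Function.comp_apply, id, hk n]
    simp_rw [this]
    exact (hx f).comp hk'

lemma tf_apply {A : Type*} [NormedRing A] [NormedAlgebra ℝ A]
    (f : A →L[ℝ] ℝ) (a v : A) : Tf f a v = f (a * v) := rfl

theorem wpL_all_iff_jwsc {A : Type*} [NormedRing A] [NormedAlgebra ℝ A] [CompleteSpace A] :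
    (∀ f : A →L[ℝ] ℝ, ∀ K : Set A, WeaklyPrecompact K → LSet (Tf f '' K)) ↔
      (∀ x y : ℕ → A, WeaklyNull x → WeaklyNull y → WeaklyNull (fun n => x n * y n)) := by
  constructor
  · intro H x y hx hy f
    rw [Metric.tendsto_atTop]
    intro ε hε
    obtain ⟨N, hN⟩ := H f (Set.range x) (weaklyPrecompact_range hx) y hy ε hε
    refine ⟨N, fun n hn => ?_⟩
    have := hN n hn (Tf f (x n)) ⟨x n, Set.mem_range_self n, rfl⟩
    rw [tf_apply] at this
    simpa [Real.dist_eq] using this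
  · intro H f K hK
    by_contra hL
    unfold LSet at hL
    push_neg at hL
    obtain ⟨x, hx, ε, hε, hN⟩ := hL
    have hfreq : ∃ᶠ n in atTop, ∃ g ∈ Tf f '' K, ε ≤ |g (x n)| := by
      rw [frequently_atTop]
      exact hN
    obtain ⟨ψ, hψ, hψP⟩ := extraction_of_frequently_atTop hfreq
    have : ∀ i, ∃ a ∈ K, ε ≤ |f (a * x (ψ i))| := by
      intro i
      obtain ⟨g, ⟨a, haK, rfl⟩, hg⟩ := hψP i
      exact ⟨a, haK, hg⟩
    choose a haK ha using this
    obtain ⟨φ, hφ, hbC⟩ := hK a haK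
    set b : ℕ → A := a ∘ φ with hb
    set z : ℕ → A := fun i => x (ψ (φ i)) with hzdef
    have hz : WeaklyNull z := weaklyNull_comp' hx ((hψ.comp hφ).tendsto_atTop)
    have hbz : ∀ i, ε ≤ |f (b i * z i)| := fun i => ha (φ i)
    -- for each i, f (b i * z m) → 0 in m
    have hsmall : ∀ i, ∃ M, ∀ m ≥ M, |f (b i * z m)| < ε / 2 := by
      intro i
      have : Tendsto (fun m => f (b i * z m)) atTop (𝓝 0) := hz (Tf f (b i))
      rw [Metric.tendsto_atTop] at this
      obtain ⟨M, hM⟩ := this (ε / 2) (by linarith)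
      exact ⟨M, fun m hm => by simpa [Real.dist_eq] using hM m hm⟩
    choose M hM using hsmall
    -- greedy recursion
    let j : ℕ → ℕ := fun i => Nat.rec 0 (fun i ji => max (ji + 1) (M ji)) i
    have hjsucc : ∀ i, j (i + 1) = max (j i + 1) (M (j i)) := fun i => rfl
    have hjmono : StrictMono j := strictMono_nat_of_lt_succ fun i => by
      rw [hjsucc]; exact lt_of_lt_of_le (Nat.lt_succ_self _) (le_max_left _ _)
    have hjM : ∀ i, |f (b (j i) * z (j (i + 1)))| < ε / 2 := fun i =>
      hM (j i) (j (i + 1)) (by rw [hjsucc]; exact le_max_right _ _)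
    set u : ℕ → A := fun i => b (j (i + 1)) - b (j i) with hu
    set v : ℕ → A := fun i => z (j (i + 1)) with hv
    have hun : WeaklyNull u := by
      intro g
      obtain ⟨L, hLg⟩ := hbC g
      have h1 : Tendsto (fun i => g (b (j (i + 1)))) atTop (𝓝 L) :=
        hLg.comp ((hjmono.comp (strictMono_id.add_const 1)).tendsto_atTop)
      have h2 : Tendsto (fun i => g (b (j i))) atTop (𝓝 L) :=
        hLg.comp hjmono.tendsto_atTop
      have := h1.sub h2
      rw [sub_self] at this
      simpa only [hu, map_sub] using this
    have hvn : WeaklyNull v :=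
      weaklyNull_comp' hz ((hjmono.comp (strictMono_id.add_const 1)).tendsto_atTop)
    have hT := H u v hun hvn f
    rw [Metric.tendsto_atTop] at hT
    obtain ⟨N₀, hN₀⟩ := hT (ε / 2) (by linarith)
    have hd := hN₀ N₀ le_rfl
    rw [Real.dist_eq, sub_zero] at hd
    have key : f (u N₀ * v N₀) = f (b (j (N₀ + 1)) * z (j (N₀ + 1))) - f (b (j N₀) * z (j (N₀ + 1))) := by
      simp [hu, hv, sub_mul, map_sub]
    have h1 := hbz (j (N₀ + 1))
    have h2 := hjM N₀
    have := abs_sub_abs_le_abs_sub (f (b (j (N₀ + 1)) * z (j (N₀ + 1)))) (f (b (j N₀) * z (j (N₀ + 1))))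
    rw [← key] at this
    linarith
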